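/- Let R ⊆ A be the k-linear span of all elements h^l_n(w) − w for monomials w and 2 ≤ n ≤ len(w). Then for every monomial w of length n ≥ 1, the element η(w) − (−1)^{n−1}·n·w lies in R. (Equivalently, η(w) = (−1)^{n−1}·n·w in the quotient A/R.) -/

import Mathlib

noncomputable section

abbrev FA (k : Type*) [Field k] (p : ℕ) := MonoidAlgebra k (FreeMonoid (Fin p))

def mon (k : Type*) [Field k] {p : ℕ} (l : List (Fin p)) : FA k p :=
  MonoidAlgebra.of k (FreeMonoid (Fin p)) (FreeMonoid.ofList l)

def etaRev (k : Type*) [Field k] {p : ℕ} : List (Fin p) → FA k p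
  | [] => 0
  | [a] => mon k [a]
  | a :: b :: l => mon k [a] * etaRev k (b :: l) - etaRev k (b :: l) * mon k [a]

def etaList (k : Type*) [Field k] {p : ℕ} (l : List (Fin p)) : FA k p :=
  etaRev k l.reverse

def etaLin (k : Type*) [Field k] (p : ℕ) : FA k p →ₗ[k] FA k p :=
  Finsupp.lift (FA k p) k (FreeMonoid (Fin p)) (fun w => etaList k (FreeMonoid.toList w)) ∘ₗ
    (MonoidAlgebra.coeffLinearEquiv k).toLinearMap

/-- The fold move `h^l_n` on a monomial (word). -/
def hl (k : Type*) [Field k] {p : ℕ} (n : ℕ) (l : List (Fin p)) : FA k p :=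
  if 2 ≤ n ∧ n ≤ l.length then
    ((-1 : k) ^ (n - 1)) •
      (mon k ((l.drop (n - 1)).take 1) * etaList k (l.take (n - 1)) * mon k (l.drop n))
  else mon k l

def hlLin (k : Type*) [Field k] (p n : ℕ) : FA k p →ₗ[k] FA k p :=
  Finsupp.lift (FA k p) k (FreeMonoid (Fin p)) (fun w => hl k n (FreeMonoid.toList w)) ∘ₗ
    (MonoidAlgebra.coeffLinearEquiv k).toLinearMap

/-- The span of the `H^l` relations `h^l_n(w) - w`. -/
def Rspan (k : Type*) [Field k] (p : ℕ) : Submodule k (FA k p) :=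
  Submodule.span k
    {x | ∃ (l : List (Fin p)) (n : ℕ), 2 ≤ n ∧ n ≤ l.length ∧ x = hl k n l - mon k l}


lemma mon_append (k : Type*) [Field k] {p : ℕ} (l l' : List (Fin p)) :
    mon k (l ++ l') = mon k l * mon k l' := by
  unfold mon
  rw [← map_mul]
  rfl

lemma etaList_concat (k : Type*) [Field k] {p : ℕ} (a : Fin p) (l : List (Fin p))
    (hne : l ≠ []) :
    etaList k (l ++ [a]) = mon k [a] * etaList k l - etaList k l * mon k [a] := by
  obtain ⟨b, t, ht⟩ : ∃ b t, l.reverse = b :: t := by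
    cases h : l.reverse with
    | nil => exact absurd (List.reverse_eq_nil_iff.mp h) hne
    | cons b t => exact ⟨b, t, rfl⟩
  unfold etaList
  rw [List.reverse_append, List.reverse_singleton, List.singleton_append, ht]
  rfl

lemma hl_concat (k : Type*) [Field k] {p : ℕ} {n : ℕ} (l : List (Fin p)) (a : Fin p)
    (h1 : 2 ≤ n) (h2 : n ≤ l.length) :
    hl k n (l ++ [a]) = hl k n l * mon k [a] := by
  have hn1 : n - 1 ≤ l.length := by omega
  unfold hl
  rw [if_pos ⟨h1, by simpa using by omega⟩, if_pos ⟨h1, h2⟩]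
  rw [List.take_append_of_le_length hn1, List.drop_append_of_le_length hn1,
      List.drop_append_of_le_length h2, mon_append,
      List.take_append_of_le_length (by simpa [List.length_drop] using by omega)]
  rw [smul_mul_assoc]
  congr 1
  rw [← mul_assoc]

lemma Rspan_mul_right (k : Type*) [Field k] {p : ℕ} (a : Fin p) {x : FA k p}
    (hx : x ∈ Rspan k p) : x * mon k [a] ∈ Rspan k p := by
  induction hx using Submodule.span_induction with
  | mem y hy =>
    obtain ⟨l, n, h1, h2, rfl⟩ := hy
    rw [sub_mul, ← hl_concat k l a h1 h2, ← mon_append]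
    exact Submodule.subset_span ⟨l ++ [a], n, h1, by simp; omega, rfl⟩
  | zero => simp [Rspan]
  | add y z _ _ hy hz => rw [add_mul]; exact Submodule.add_mem _ hy hz
  | smul c y _ hy => rw [smul_mul_assoc]; exact Submodule.smul_mem _ _ hy

lemma hl_last (k : Type*) [Field k] {p : ℕ} (l : List (Fin p)) (a : Fin p)
    (hm : 1 ≤ l.length) :
    hl k (l.length + 1) (l ++ [a]) = ((-1 : k) ^ l.length) • (mon k [a] * etaList k l) := by
  unfold hl
  rw [if_pos ⟨by omega, by simp⟩]
  simp [List.take_left, List.drop_left, mon]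
  rw [← MonoidAlgebra.one_def, mul_one]

theorem eta_mod_R' (k : Type*) [Field k] {p : ℕ}
    (w : List (Fin p)) :
    etaList k w - ((-1 : k) ^ (w.length - 1) * (w.length : k)) • mon k w ∈ Rspan k p := by
  induction w using List.reverseRecOn with
  | nil => simp [etaList, etaRev]
  | append_singleton l a ih =>
    by_cases hne : l = []
    · subst hne
      simp [etaList, etaRev]
    · have hm : 1 ≤ l.length := by
        cases l with | nil => exact absurd rfl hne | cons b t => simp
      obtain ⟨m, hml⟩ : ∃ m, l.length = m + 1 := ⟨l.length - 1, by omega⟩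
      have hg : hl k (l.length + 1) (l ++ [a]) - mon k (l ++ [a]) ∈ Rspan k p :=
        Submodule.subset_span ⟨l ++ [a], l.length + 1, by omega, by simp, rfl⟩
      rw [hl_last k l a hm] at hg
      have hr := Rspan_mul_right k a ih
      rw [sub_mul, smul_mul_assoc, ← mon_append] at hr
      have key : etaList k (l ++ [a]) -
          ((-1 : k) ^ ((l ++ [a]).length - 1) * ((l ++ [a]).length : k)) • mon k (l ++ [a]) =
          ((-1 : k) ^ l.length) • (((-1 : k) ^ l.length) • (mon k [a] * etaList k l)
              - mon k (l ++ [a]))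
          - (etaList k l * mon k [a]
              - ((-1 : k) ^ (l.length - 1) * (l.length : k)) • mon k (l ++ [a])) := by
        rw [etaList_concat k a l hne]
        rw [smul_sub, smul_smul, ← pow_add]
        have h2 : ((-1 : k)) ^ (l.length + l.length) = 1 := by
          rw [hml]; rw [show (m+1)+(m+1) = 2*(m+1) by ring, pow_mul]; norm_num
        rw [h2, one_smul]
        simp only [List.length_append, List.length_singleton, hml]
        push_cast
        ring_nf
        module
      rw [key]
      exact Submodule.sub_mem _ (Submodule.smul_mem _ _ hg) hr


/-- η(w) ≡ (−1)^{n−1}·n·w modulo the span R of the relations h^l_n(w) − w. -/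
theorem eta_mod_R (k : Type*) [Field k] (hk : ringChar k ≠ 2) {p n : ℕ} (hn : 1 ≤ n)
    (w : List (Fin p)) (hw : w.length = n) :
    etaList k w - ((-1 : k) ^ (n - 1) * (n : k)) • mon k w ∈ Rspan k p := by
  subst hw
  exact eta_mod_R' k w
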